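/- Let (M,φ,ξ_α,η^α,g) be a Lorentzian S-manifold, p ∈ M, x ∈ S_φ((ξ_1)_p) a unit vector in Im(φ_p), and u = (ξ_1)_p + x ∈ N_φ((ξ_1)_p). Set V = x^⊥ ∩ Im(φ_p). Then for all y, z ∈ V: ḡ(R̄_u(ȳ), z̄) = g(y,z) + g(R_x(y), z), where R_x is the Jacobi operator with respect to the spacelike unit vector x. Moreover ḡ(R̄_u(ξ̄_α), ξ̄_β) = 1 and ḡ(R̄_u(ȳ), ξ̄_β) = 0 for α, β ∈ {2,…,s} and y ∈ V; and g(R_x(y), ξ_1) = 0, g(R_x(ξ_1), ξ_1) = 1, g(R_x(ξ_1), ξ_α) = −1 for α ≥ 2. -/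

import Mathlib

/-- A symmetric bilinear form on a real vector space is *Lorentzian* if it admits an
orthonormal basis with exactly one timelike vector. -/
def IsLorentzian {V : Type*} [AddCommGroup V] [Module ℝ V]
    (g : V →ₗ[ℝ] V →ₗ[ℝ] ℝ) : Prop :=
  ∃ (n : ℕ) (b : Module.Basis (Fin (n + 1)) ℝ V), ∀ i j,
    g (b i) (b j) = if i = j then (if i = 0 then (-1 : ℝ) else 1) else 0

/-- On a Lorentzian `S`-manifold (timelike `ξ_1` indexed by `0`), for a unit
`x ∈ Im(φ)` and `u = ξ_1 + x ∈ N_φ(ξ_1)`, with `V = x^⊥ ∩ Im(φ)`: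
`ḡ(R̄_u(ȳ),z̄) = g(y,z) + g(R_x(y),z)` for `y,z ∈ V`;
`ḡ(R̄_u(ξ̄_α),ξ̄_β) = 1` and `ḡ(R̄_u(ȳ),ξ̄_β) = 0` for `α,β ≥ 2`, `y ∈ V`;
and `g(R_x(y),ξ_1) = 0`, `g(R_x(ξ_1),ξ_1) = 1`, `g(R_x(ξ_1),ξ_α) = −1` for `α ≥ 2`.
Here `R_x(y) = R(y,x)x = R13 y x x` with `R13 z w y = R(z,w)y` and the convention
`R(X,Y,Z,W) = g(R(Z,W)Y,X)`; the pairings of `R̄_u` with representatives compute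
`ḡ` on `ū^⊥`. -/
theorem null_jacobi_vs_spacelike_jacobi_computations
    {V : Type*} [AddCommGroup V] [Module ℝ V] [FiniteDimensional ℝ V]
    (g : V →ₗ[ℝ] V →ₗ[ℝ] ℝ) (hgsymm : ∀ x y, g x y = g y x)
    (hgL : IsLorentzian g)
    {s₀ : ℕ}
    (φ : V →ₗ[ℝ] V) (ξ : Fin (s₀ + 1) → V) (η : Fin (s₀ + 1) → V →ₗ[ℝ] ℝ)
    (ε : Fin (s₀ + 1) → ℝ)
    (hphi2 : ∀ x, φ (φ x) = -x + ∑ α, η α x • ξ α)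
    (hηξ : ∀ α β, η α (ξ β) = if α = β then 1 else 0)
    (hφξ : ∀ α, φ (ξ α) = 0) (hηφ : ∀ α x, η α (φ x) = 0)
    (hε0 : ε 0 = -1) (hεpos : ∀ α, α ≠ 0 → ε α = 1)
    (hgξξ : ∀ α β, g (ξ α) (ξ β) = if α = β then ε α else 0)
    (hgxi : ∀ α (x : V), g x (ξ α) = ε α * η α x)
    (hmetriccompat : ∀ x y, g (φ x) (φ y) = g x y - ∑ α, ε α * (η α x * η α y))
    (R13 : V →ₗ[ℝ] V →ₗ[ℝ] V →ₗ[ℝ] V)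
    -- curvature symmetries of `R(X,Y,Z,W) = g(R13 Z W Y, X)`
    (hpair : ∀ x y z w : V, g (R13 z w y) x = g (R13 x y w) z)
    (hanti1 : ∀ x y z w : V, g (R13 z w y) x = - g (R13 z w x) y)
    (hanti2 : ∀ x y z w : V, g (R13 z w y) x = - g (R13 w z y) x)
    (hbianchi : ∀ x y z w : V,
      g (R13 z w y) x + g (R13 x w z) y + g (R13 y w x) z = 0)
    -- curvature identities of the Lorentzian `S`-structure
    (hRIm : ∀ x y z : V, (∀ γ, η γ x = 0) → (∀ γ, η γ y = 0) → (∀ γ, η γ z = 0) →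
      ∀ α β,
        g (R13 z (ξ α) y) x = 0 ∧ g (R13 y (ξ β) (ξ α)) x = ε α * ε β * g x y)
    (hRξ : ∀ α β (y z : V),
      g (R13 (ξ α) z y) (ξ β) = ε β * ε α * g (φ y) (φ z))
    (hRξξ : ∀ α β γ (z : V), g (R13 (ξ α) z (ξ γ)) (ξ β) = 0)
    (x : V) (hx : ∀ γ, η γ x = 0) (hxx : g x x = 1) :
    -- `ḡ(R̄_u(ȳ),z̄) = g(y,z) + g(R_x(y),z)` for `y,z ∈ V = x^⊥ ∩ Im(φ)`
    (∀ y z : V, (∀ γ, η γ y = 0) → (∀ γ, η γ z = 0) → g x y = 0 → g x z = 0 →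
      g (R13 y (ξ 0 + x) (ξ 0 + x)) z = g y z + g (R13 y x x) z) ∧
    -- `ḡ(R̄_u(ξ̄_α),ξ̄_β) = 1` for `α,β ≥ 2`
    (∀ α β : Fin (s₀ + 1), α ≠ 0 → β ≠ 0 →
      g (R13 (ξ α) (ξ 0 + x) (ξ 0 + x)) (ξ β) = 1) ∧
    -- `ḡ(R̄_u(ȳ),ξ̄_β) = 0` for `y ∈ V`, `β ≥ 2`
    (∀ (y : V) (β : Fin (s₀ + 1)), (∀ γ, η γ y = 0) → g x y = 0 → β ≠ 0 →
      g (R13 y (ξ 0 + x) (ξ 0 + x)) (ξ β) = 0) ∧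
    -- `g(R_x(y),ξ_1) = 0` for `y ∈ V`
    (∀ y : V, (∀ γ, η γ y = 0) → g x y = 0 → g (R13 y x x) (ξ 0) = 0) ∧
    -- `g(R_x(ξ_1),ξ_1) = 1`
    g (R13 (ξ 0) x x) (ξ 0) = 1 ∧
    -- `g(R_x(ξ_1),ξ_α) = −1` for `α ≥ 2`
    (∀ α : Fin (s₀ + 1), α ≠ 0 → g (R13 (ξ 0) x x) (ξ α) = -1) := by
  have h0 : ∀ γ, η γ (0:V) = 0 := fun γ => map_zero _
  have hφxx : g (φ x) (φ x) = 1 := by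
    rw [hmetriccompat]; simp [hx, hxx]
  have hT4 : ∀ (y : V), (∀ γ, η γ y = 0) → ∀ β, g (R13 y x x) (ξ β) = 0 := by
    intro y hy β
    rw [hanti1 (ξ β) x y x, hpair x (ξ β) y x, (hRIm y x x hy hx hx β β).1]
    ring
  refine ⟨?_, ?_, ?_, ?_, ?_, ?_⟩
  · intro y z hy hz hxy hxz
    have e1 : g (R13 y (ξ 0) (ξ 0)) z = g y z := by
      rw [(hRIm z y 0 hz hy h0 0 0).2, hε0, hgsymm z y]; ring
    have e2 : g (R13 y (ξ 0) x) z = 0 := (hRIm z x y hz hx hy 0 0).1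
    have e3 : g (R13 y x (ξ 0)) z = 0 := by
      rw [hpair z (ξ 0) y x]
      exact (hRIm y x z hy hx hz 0 0).1
    simp only [map_add, LinearMap.add_apply]
    rw [e1, e2, e3]; ring
  · intro α β hα hβ
    have f1 : g (R13 (ξ α) (ξ 0) (ξ 0)) (ξ β) = 0 := hRξξ α β 0 (ξ 0)
    have f2 : g (R13 (ξ α) (ξ 0) x) (ξ β) = 0 := by
      rw [hRξ α β x (ξ 0), hφξ]; simp
    have f3 : g (R13 (ξ α) x (ξ 0)) (ξ β) = 0 := hRξξ α β 0 x
    have f4 : g (R13 (ξ α) x x) (ξ β) = 1 := by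
      rw [hRξ α β x x, hφxx, hεpos α hα, hεpos β hβ]; ring
    simp only [map_add, LinearMap.add_apply]
    rw [f1, f2, f3, f4]; ring
  · intro y β hy hxy hβ
    have hgyx : g y x = 0 := by rw [hgsymm]; exact hxy
    have hφyx : g (φ y) (φ x) = 0 := by
      rw [hmetriccompat]; simp [hy, hgyx]
    have t1 : g (R13 y (ξ 0) (ξ 0)) (ξ β) = 0 := by
      rw [hpair (ξ β) (ξ 0) y (ξ 0), hanti1 y (ξ 0) (ξ β) (ξ 0),
        hRξ β 0 y (ξ 0), hφξ]
      simp
    have t2 : g (R13 y (ξ 0) x) (ξ β) = 0 := by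
      rw [hpair (ξ β) x y (ξ 0), hanti1 y (ξ 0) (ξ β) x, hRξ β 0 y x, hφyx]
      ring
    have t3 : g (R13 y x (ξ 0)) (ξ β) = 0 := by
      have hb := hbianchi (ξ β) (ξ 0) y x
      have h2 : g (R13 (ξ β) x y) (ξ 0) = 0 := by
        rw [hRξ β 0 y x, hφyx]; ring
      have h3 : g (R13 (ξ 0) x (ξ β)) y = 0 := by
        rw [hpair y (ξ β) (ξ 0) x, hanti1 (ξ 0) x y (ξ β),
          (hRIm x y 0 hx hy h0 0 β).2, hε0, hxy]
        ring
      linarith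
    have t4 : g (R13 y x x) (ξ β) = 0 := hT4 y hy β
    simp only [map_add, LinearMap.add_apply]
    rw [t1, t2, t3, t4]; ring
  · intro y hy _
    exact hT4 y hy 0
  · rw [hRξ 0 0 x x, hφxx, hε0]; ring
  · intro α hα
    rw [hRξ 0 α x x, hφxx, hε0, hεpos α hα]; ring
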